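/- An integer n > 3 is prime if and only if the sum, over all primes p with p ≤ √n, of (C(n - 1, p - 1) mod p) equals 0. -/

import Mathlib

lemma key_binom_mod (p n : ℕ) (hp : p.Prime) (hn : 1 ≤ n) :
    (n - 1).choose (p - 1) % p = if p ∣ n then 1 else 0 := by
  haveI : Fact p.Prime := ⟨hp⟩
  have hmod : (n - 1).choose (p - 1) % p
      = (((n - 1) % p).choose ((p - 1) % p) * ((n - 1) / p).choose ((p - 1) / p)) % p :=
    Choose.choose_modEq_choose_mod_mul_choose_div_nat
  have hplt : p - 1 < p := Nat.sub_lt hp.pos one_pos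
  rw [Nat.mod_eq_of_lt hplt, Nat.div_eq_of_lt hplt, Nat.choose_zero_right, mul_one] at hmod
  have hiff : (n - 1) % p = p - 1 ↔ p ∣ n := by
    constructor
    · intro h
      have : n % p = 0 := by
        have hn' : n = (n - 1) + 1 := by omega
        rw [hn', Nat.add_mod, h]
        have : p - 1 + 1 = p := Nat.succ_pred_eq_of_pos hp.pos
        simp [this]
      exact Nat.dvd_of_mod_eq_zero this
    · rintro ⟨k, rfl⟩
      have hk : 1 ≤ k := by
        rcases Nat.eq_zero_or_pos k with h | h
        · simp [h] at hn
        · exact h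
      obtain ⟨m, rfl⟩ : ∃ m, k = m + 1 := ⟨k - 1, by omega⟩
      have h1 : p * (m + 1) - 1 = p * m + (p - 1) := by
        rw [Nat.mul_add, mul_one, Nat.add_sub_assoc hp.one_le]
      rw [h1, Nat.mul_add_mod, Nat.mod_eq_of_lt hplt]
  split_ifs with hdvd
  · rw [hmod, hiff.mpr hdvd, Nat.choose_self, Nat.mod_eq_of_lt hp.one_lt]
  · have hne : (n - 1) % p ≠ p - 1 := fun h => hdvd (hiff.mp h)
    have hlt : (n - 1) % p < p - 1 := by
      have := Nat.mod_lt (n - 1) hp.pos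
      omega
    rw [hmod, Nat.choose_eq_zero_of_lt hlt, Nat.zero_mod]

theorem prime_iff_sum_binom_mod_p (n : ℕ) (hn : 3 < n) :
    n.Prime ↔
      ∑ p ∈ (Finset.range (n + 1)).filter (fun p => p.Prime ∧ p ^ 2 ≤ n),
        ((n - 1).choose (p - 1) % p) = 0 := by
  have hn1 : 1 ≤ n := by omega
  constructor
  · intro hprime
    apply Finset.sum_eq_zero
    intro p hp
    simp only [Finset.mem_filter, Finset.mem_range] at hp
    obtain ⟨_, hpp, hp2⟩ := hp
    have hpn : p < n := by nlinarith [hpp.two_le]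
    have hnd : ¬ p ∣ n := fun h => absurd ((Nat.prime_dvd_prime_iff_eq hpp hprime).mp h) (by omega)
    rw [key_binom_mod p n hpp hn1, if_neg hnd]
  · intro hsum
    by_contra hnp
    set p := n.minFac with hpdef
    have hpp : p.Prime := Nat.minFac_prime (by omega)
    have hpd : p ∣ n := Nat.minFac_dvd n
    have hp2 : p ^ 2 ≤ n := by
      have := Nat.minFac_sq_le_self (by omega) hnp
      simpa [hpdef] using this
    have hmem : p ∈ (Finset.range (n + 1)).filter (fun p => p.Prime ∧ p ^ 2 ≤ n) := by
      simp only [Finset.mem_filter, Finset.mem_range]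
      exact ⟨by have := Nat.le_of_dvd (by omega) hpd; omega, hpp, hp2⟩
    have := (Finset.sum_eq_zero_iff.mp hsum) p hmem
    rw [key_binom_mod p n hpp hn1, if_pos hpd] at this
    exact one_ne_zero this
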